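/- Let x ∈ ℝ^d be a fixed nonzero vector and y ∈ ℝ^d a standard Gaussian random vector. Then E[(⟨x, y⟩² / ‖y‖²) · 1{⟨x,y⟩ > 0}] = ‖x‖²/(2d). Equivalently, the conditional expectation of ⟨x,y⟩²/‖y‖² given ⟨x,y⟩ > 0 equals ‖x‖²/(2d). -/

import Mathlib

open MeasureTheory ProbabilityTheory Real
open scoped RealInnerProductSpace ENNReal NNReal

lemma my_lintegral_pi_prod : ∀ {n : ℕ} (m : Fin n → Measure ℝ), (∀ i, SigmaFinite (m i)) →
    ∀ (f : Fin n → ℝ → ℝ≥0∞), (∀ i, Measurable (f i)) →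
    ∫⁻ a, ∏ i, f i (a i) ∂(Measure.pi m) = ∏ i, ∫⁻ t, f i t ∂(m i) := by
  intro n
  induction n with
  | zero => intro m _ f _; simp
  | succ n ih =>
    intro m hm f hf
    have := hm
    have h := (measurePreserving_piFinSuccAbove m 0).symm
    rw [← h.lintegral_comp_emb (MeasurableEquiv.measurableEmbedding _)]
    simp_rw [MeasurableEquiv.piFinSuccAbove_symm_apply, Fin.insertNthEquiv,
      Fin.prod_univ_succ, Fin.insertNth_zero, Equiv.coe_fn_mk, Fin.zero_succAbove, cast_eq,
      Fin.cons_succ, Fin.cons_zero]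
    rw [lintegral_prod_mul (f := f 0) (g := fun b : Fin n → ℝ => ∏ x, f x.succ (b x))
      ((hf 0).aemeasurable)
      ((Finset.measurable_prod _ (fun i _ => (hf i.succ).comp (measurable_pi_apply i))).aemeasurable)]
    rw [ih _ (fun i => hm _) _ (fun i => hf i.succ)]

noncomputable def stdDens (d : ℕ) : EuclideanSpace ℝ (Fin d) → ℝ≥0∞ :=
  fun z => ENNReal.ofReal ((√(2 * π))⁻¹ ^ d * rexp (-‖z‖ ^ 2 / 2))

noncomputable def stdG (d : ℕ) : Measure (EuclideanSpace ℝ (Fin d)) :=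
  volume.withDensity (stdDens d)

lemma norm_sq_eq_sum {d : ℕ} (z : EuclideanSpace ℝ (Fin d)) : ‖z‖ ^ 2 = ∑ i, (z i) ^ 2 := by
  rw [EuclideanSpace.norm_eq, Real.sq_sqrt (by positivity)]
  simp [Real.norm_eq_abs, sq_abs]

lemma prod_gaussianPDF_eq {d : ℕ} (z : EuclideanSpace ℝ (Fin d)) :
    (∏ i, gaussianPDF 0 1 (z i)) = stdDens d z := by
  simp only [gaussianPDF, gaussianPDFReal]
  rw [← ENNReal.ofReal_prod_of_nonneg (fun i _ => by positivity)]
  unfold stdDens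
  congr 1
  rw [Finset.prod_mul_distrib, Finset.prod_const, ← Real.exp_sum, Finset.card_univ,
    Fintype.card_fin]
  congr 2
  · norm_num
  · simp only [NNReal.coe_one, mul_one, sub_zero, div_eq_mul_inv, ← Finset.sum_mul,
      norm_sq_eq_sum, Finset.sum_neg_distrib, neg_mul]

lemma map_withDensity_equiv {α β : Type*} [MeasurableSpace α] [MeasurableSpace β]
    (e : α ≃ᵐ β) (μ : Measure α) (g : β → ℝ≥0∞) (hg : Measurable g) :
    (μ.withDensity (g ∘ e)).map e = (μ.map e).withDensity g := by
  ext s hs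
  rw [Measure.map_apply e.measurable hs, withDensity_apply _ (e.measurable hs),
    withDensity_apply _ hs, setLIntegral_map hs hg e.measurable]
  rfl

lemma indicator_pi_prod {d : ℕ} (s : Fin d → Set ℝ) (f : Fin d → ℝ → ℝ≥0∞)
    (a : Fin d → ℝ) :
    (Set.univ.pi s).indicator (fun a => ∏ i, f i (a i)) a
      = ∏ i, (s i).indicator (f i) (a i) := by
  by_cases h : a ∈ Set.univ.pi s
  · rw [Set.indicator_of_mem h]
    exact Finset.prod_congr rfl fun i _ => (Set.indicator_of_mem (h i trivial) _).symm
  · rw [Set.indicator_of_notMem h]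
    rw [Set.mem_univ_pi, not_forall] at h
    obtain ⟨i, hi⟩ := h
    exact (Finset.prod_eq_zero (Finset.mem_univ i) (Set.indicator_of_notMem hi _)).symm

lemma pi_gaussian_eq_withDensity (d : ℕ) :
    Measure.pi (fun _ : Fin d => gaussianReal 0 1)
      = (volume : Measure (Fin d → ℝ)).withDensity (fun a => ∏ i, gaussianPDF 0 1 (a i)) := by
  refine Measure.pi_eq fun s hs => ?_
  rw [withDensity_apply _ (MeasurableSet.univ_pi hs), ← lintegral_indicator (MeasurableSet.univ_pi hs)]
  simp_rw [indicator_pi_prod s (fun _ => gaussianPDF 0 1)]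
  rw [volume_pi, my_lintegral_pi_prod _ (fun _ => inferInstance) _
    (fun i => (measurable_gaussianPDF 0 1).indicator (hs i))]
  refine Finset.prod_congr rfl fun i _ => ?_
  rw [lintegral_indicator (hs i), gaussianReal_of_var_ne_zero 0 one_ne_zero,
    withDensity_apply _ (hs i)]

lemma stdG_eq_pi (d : ℕ) :
    stdG d = (Measure.pi fun _ : Fin d => gaussianReal 0 1).map
      (MeasurableEquiv.toLp 2 (Fin d → ℝ)) := by
  rw [pi_gaussian_eq_withDensity]
  have h1 : (fun a : Fin d → ℝ => ∏ i, gaussianPDF 0 1 (a i))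
      = (stdDens d) ∘ (MeasurableEquiv.toLp 2 (Fin d → ℝ)) := by
    funext a
    exact prod_gaussianPDF_eq ((MeasurableEquiv.toLp 2 (Fin d → ℝ)) a)
  have hmeasdens : Measurable (stdDens d) := by
    unfold stdDens
    exact ((measurable_const.mul ((measurable_norm.pow_const 2).neg.div_const 2).exp)).ennreal_ofReal
  rw [h1, map_withDensity_equiv _ _ _ hmeasdens,
    ← MeasurableEquiv.symm_symm (MeasurableEquiv.toLp 2 (Fin d → ℝ)),
    ((EuclideanSpace.volume_preserving_symm_measurableEquiv_toLp (Fin d)).symm).map_eq]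
  rfl

instance stdG_prob (d : ℕ) : IsProbabilityMeasure (stdG d) := by
  rw [stdG_eq_pi]
  have : IsProbabilityMeasure (Measure.pi fun _ : Fin d => gaussianReal 0 1) := inferInstance
  exact Measure.isProbabilityMeasure_map (MeasurableEquiv.measurable _).aemeasurable

lemma stdG_map_isometry {d : ℕ}
    (L : EuclideanSpace ℝ (Fin d) ≃ₗᵢ[ℝ] EuclideanSpace ℝ (Fin d)) :
    (stdG d).map L = stdG d := by
  have hmeasdens : Measurable (stdDens d) := by
    unfold stdDens
    exact ((measurable_const.mul
      ((measurable_norm.pow_const 2).neg.div_const 2).exp)).ennreal_ofReal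
  have hcomp : stdDens d ∘ (L.toHomeomorph.toMeasurableEquiv) = stdDens d := by
    funext z
    simp only [Function.comp_apply, stdDens]
    rw [show ‖L.toHomeomorph.toMeasurableEquiv z‖ = ‖z‖ from L.norm_map z]
  have := map_withDensity_equiv (L.toHomeomorph.toMeasurableEquiv) volume (stdDens d) hmeasdens
  rw [hcomp] at this
  have hvol : volume.map (L.toHomeomorph.toMeasurableEquiv) = volume := L.measurePreserving.map_eq
  calc (stdG d).map L = (volume.withDensity (stdDens d)).map (L.toHomeomorph.toMeasurableEquiv) :=
        rfl
    _ = (volume.map (L.toHomeomorph.toMeasurableEquiv)).withDensity (stdDens d) := this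
    _ = stdG d := by rw [hvol]; rfl

lemma stdG_null_hyperplane {d : ℕ} (x : EuclideanSpace ℝ (Fin d)) (hx : x ≠ 0) :
    stdG d {z | ⟪x, z⟫ = 0} = 0 := by
  have hset : {z : EuclideanSpace ℝ (Fin d) | ⟪x, z⟫ = 0}
      = ((LinearMap.ker ((innerSL ℝ x : EuclideanSpace ℝ (Fin d) →L[ℝ] ℝ) : EuclideanSpace ℝ (Fin d) →ₗ[ℝ] ℝ) : Submodule ℝ (EuclideanSpace ℝ (Fin d))) : Set _) := by
    ext z
    simp [LinearMap.mem_ker]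
  have hne : LinearMap.ker ((innerSL ℝ x : EuclideanSpace ℝ (Fin d) →L[ℝ] ℝ) : EuclideanSpace ℝ (Fin d) →ₗ[ℝ] ℝ) ≠ ⊤ := by
    intro h
    have hxmem : x ∈ LinearMap.ker ((innerSL ℝ x : EuclideanSpace ℝ (Fin d) →L[ℝ] ℝ) : EuclideanSpace ℝ (Fin d) →ₗ[ℝ] ℝ) := by
      rw [h]; trivial
    rw [LinearMap.mem_ker] at hxmem
    simp only [ContinuousLinearMap.coe_coe, innerSL_apply_apply] at hxmem
    exact hx (inner_self_eq_zero.mp hxmem)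
  have hvol : (volume : Measure (EuclideanSpace ℝ (Fin d)))
      ((LinearMap.ker ((innerSL ℝ x : EuclideanSpace ℝ (Fin d) →L[ℝ] ℝ) : EuclideanSpace ℝ (Fin d) →ₗ[ℝ] ℝ) : Submodule ℝ (EuclideanSpace ℝ (Fin d))) : Set _) = 0 :=
    Measure.addHaar_submodule _ _ hne
  rw [hset]
  exact withDensity_absolutelyContinuous _ _ hvol

section Integrals

variable {d : ℕ}

noncomputable def ratio (v z : EuclideanSpace ℝ (Fin d)) : ℝ := ⟪v, z⟫ ^ 2 / ‖z‖ ^ 2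

lemma ratio_meas (v : EuclideanSpace ℝ (Fin d)) : Measurable (ratio v) := by
  have h : Continuous fun z : EuclideanSpace ℝ (Fin d) => ⟪v, z⟫ :=
    Continuous.inner continuous_const continuous_id
  exact ((h.measurable.pow_const 2)).div ((measurable_norm.pow_const 2))

lemma ratio_nonneg (v z : EuclideanSpace ℝ (Fin d)) : 0 ≤ ratio v z :=
  div_nonneg (sq_nonneg _) (sq_nonneg _)

lemma ratio_le (v z : EuclideanSpace ℝ (Fin d)) : ratio v z ≤ ‖v‖ ^ 2 := by
  unfold ratio
  rcases eq_or_ne z 0 with rfl | hz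
  · simp [inner_zero_right]
  · rw [div_le_iff₀ (pow_pos (norm_pos_iff.mpr hz) 2)]
    calc ⟪v, z⟫ ^ 2 = |⟪v, z⟫| ^ 2 := (sq_abs _).symm
      _ ≤ (‖v‖ * ‖z‖) ^ 2 := by
          have := abs_real_inner_le_norm v z
          exact pow_le_pow_left₀ (abs_nonneg _) this 2
      _ = ‖v‖ ^ 2 * ‖z‖ ^ 2 := by ring

lemma ratio_integrable (v : EuclideanSpace ℝ (Fin d)) (μ : Measure (EuclideanSpace ℝ (Fin d)))
    [IsFiniteMeasure μ] : Integrable (ratio v) μ := by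
  refine Integrable.mono' (integrable_const (‖v‖ ^ 2)) (ratio_meas v).aestronglyMeasurable ?_
  filter_upwards with z
  rw [Real.norm_eq_abs, abs_of_nonneg (ratio_nonneg v z)]
  exact ratio_le v z

lemma integral_stdG_comp (L : EuclideanSpace ℝ (Fin d) ≃ₗᵢ[ℝ] EuclideanSpace ℝ (Fin d))
    (f : EuclideanSpace ℝ (Fin d) → ℝ) (hf : AEStronglyMeasurable f (stdG d)) :
    ∫ z, f (L z) ∂(stdG d) = ∫ z, f z ∂(stdG d) := by
  conv_rhs => rw [← stdG_map_isometry L]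
  rw [integral_map (L.continuous.measurable).aemeasurable]
  rwa [stdG_map_isometry L]

end Integrals

section Coord

variable {d : ℕ}

lemma ratio_single (i : Fin d) (z : EuclideanSpace ℝ (Fin d)) :
    ratio (EuclideanSpace.single i (1:ℝ)) z = (z i) ^ 2 / ‖z‖ ^ 2 := by
  unfold ratio
  congr 2
  rw [EuclideanSpace.inner_single_left]
  simp

lemma coord_integral_eq (hd : 0 < d) (i : Fin d) :
    ∫ z, ratio (EuclideanSpace.single i (1:ℝ)) z ∂(stdG d)
      = ∫ z, ratio (EuclideanSpace.single (⟨0, hd⟩ : Fin d) (1:ℝ)) z ∂(stdG d) := by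
  set i0 : Fin d := ⟨0, hd⟩
  set L : EuclideanSpace ℝ (Fin d) ≃ₗᵢ[ℝ] EuclideanSpace ℝ (Fin d) :=
    LinearIsometryEquiv.piLpCongrLeft 2 ℝ ℝ (Equiv.swap i0 i) with hL
  have key := integral_stdG_comp L (ratio (EuclideanSpace.single i0 1))
    (ratio_meas _).aestronglyMeasurable
  rw [← key]
  refine integral_congr_ae (Filter.Eventually.of_forall fun z => ?_)
  simp only [ratio_single]
  have h1 : (L z) i0 = z i := by
    rw [hL, LinearIsometryEquiv.piLpCongrLeft_apply, Equiv.piCongrLeft'_apply,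
      Equiv.symm_swap, Equiv.swap_apply_left]
  have h2 : ‖L z‖ = ‖z‖ := L.norm_map z
  rw [h1, h2]

lemma single_ne_zero' (hd : 0 < d) (i : Fin d) :
    (EuclideanSpace.single i (1:ℝ)) ≠ 0 := by
  intro h
  have := congrFun (congrArg (fun w : EuclideanSpace ℝ (Fin d) => (w : Fin d → ℝ)) h) i
  simp [EuclideanSpace.single_apply] at this

lemma ae_ne_zero (hd : 0 < d) : ∀ᵐ z ∂(stdG d), z ≠ (0 : EuclideanSpace ℝ (Fin d)) := by
  have h0 : stdG d {(0 : EuclideanSpace ℝ (Fin d))} = 0 := by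
    refine measure_mono_null ?_
      (stdG_null_hyperplane (EuclideanSpace.single (⟨0, hd⟩ : Fin d) (1:ℝ))
        (single_ne_zero' hd _))
    intro z hz
    simp only [Set.mem_singleton_iff] at hz
    simp [hz]
  rw [ae_iff]
  convert h0 using 2
  ext z
  simp

lemma sum_coord_integral (hd : 0 < d) :
    ∑ i : Fin d, ∫ z, ratio (EuclideanSpace.single i (1:ℝ)) z ∂(stdG d) = 1 := by
  rw [← integral_finset_sum _ (fun i _ => ratio_integrable _ _)]
  have hae : ∀ᵐ z ∂(stdG d), (∑ i, ratio (EuclideanSpace.single i (1:ℝ)) z) = 1 := by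
    filter_upwards [ae_ne_zero hd] with z hz
    simp only [ratio_single]
    rw [← Finset.sum_div, ← norm_sq_eq_sum,
      div_self (pow_ne_zero 2 (norm_ne_zero_iff.mpr hz))]
  rw [integral_congr_ae hae]
  simp

lemma coord_integral (hd : 0 < d) (i : Fin d) :
    ∫ z, ratio (EuclideanSpace.single i (1:ℝ)) z ∂(stdG d) = 1 / d := by
  have hsum := sum_coord_integral hd
  have heq := coord_integral_eq hd
  rw [Finset.sum_congr rfl (fun j _ => heq j)] at hsum
  rw [Finset.sum_const, Finset.card_univ, Fintype.card_fin, nsmul_eq_mul] at hsum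
  rw [heq i]
  field_simp at hsum ⊢
  linarith [hsum]

end Coord

section Main

variable {d : ℕ}

lemma integral_ratio (hd : 0 < d) (x : EuclideanSpace ℝ (Fin d)) (hx : x ≠ 0) :
    ∫ z, ratio x z ∂(stdG d) = ‖x‖ ^ 2 / d := by
  set i0 : Fin d := ⟨0, hd⟩
  set u := ‖x‖⁻¹ • x with hu
  have hnu : ‖u‖ = 1 := norm_smul_inv_norm hx
  have hcard : Module.finrank ℝ (EuclideanSpace ℝ (Fin d)) = Fintype.card (Fin d) := by simp
  have horth : Orthonormal ℝ (({i0} : Set (Fin d)).restrict fun _ : Fin d => u) := by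
    constructor
    · intro i; exact hnu
    · intro i j hij
      exact absurd (Subtype.ext ((Set.eq_of_mem_singleton i.2).trans
        (Set.eq_of_mem_singleton j.2).symm)) hij
  obtain ⟨b, hb⟩ := horth.exists_orthonormalBasis_extension_of_card_eq hcard
  have hb0 : b i0 = u := hb i0 rfl
  have key := integral_stdG_comp b.repr.symm (ratio u) (ratio_meas u).aestronglyMeasurable
  have hptw : ∀ w, ratio u (b.repr.symm w) = ratio (EuclideanSpace.single i0 (1:ℝ)) w := by
    intro w
    rw [ratio_single]
    unfold ratio
    have hinner : ⟪u, b.repr.symm w⟫ = w i0 := by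
      have h := OrthonormalBasis.repr_apply_apply b (b.repr.symm w) i0
      rw [LinearIsometryEquiv.apply_symm_apply, hb0] at h
      exact h.symm
    rw [hinner, LinearIsometryEquiv.norm_map]
  have hiu : ∫ z, ratio u z ∂(stdG d) = 1 / d := by
    rw [← key]
    simp_rw [hptw]
    exact coord_integral hd i0
  have hx' : ‖x‖ ≠ 0 := norm_ne_zero_iff.mpr hx
  have hxu : ‖x‖ • u = x := smul_inv_smul₀ hx' x
  have hratio : ∀ z, ratio x z = ‖x‖ ^ 2 * ratio u z := by
    intro z
    unfold ratio
    rw [← hxu, real_inner_smul_left, mul_pow, mul_div_assoc, hxu]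
  simp_rw [hratio]
  rw [integral_const_mul, hiu]
  field_simp

lemma half_integral (x : EuclideanSpace ℝ (Fin d)) :
    ∫ z in {z | 0 < ⟪x, z⟫}, ratio x z ∂(stdG d) = (∫ z, ratio x z ∂(stdG d)) / 2 := by
  have hcont : Continuous fun z : EuclideanSpace ℝ (Fin d) => ⟪x, z⟫ :=
    Continuous.inner continuous_const continuous_id
  have hS : MeasurableSet {z : EuclideanSpace ℝ (Fin d) | 0 < ⟪x, z⟫} :=
    measurableSet_lt measurable_const hcont.measurable
  have hS' : MeasurableSet {z : EuclideanSpace ℝ (Fin d) | ⟪x, z⟫ < 0} :=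
    measurableSet_lt hcont.measurable measurable_const
  set S := {z : EuclideanSpace ℝ (Fin d) | 0 < ⟪x, z⟫}
  set S' := {z : EuclideanSpace ℝ (Fin d) | ⟪x, z⟫ < 0}
  have hkey := integral_stdG_comp (LinearIsometryEquiv.neg ℝ) (S.indicator (ratio x))
    ((ratio_meas x).indicator hS).aestronglyMeasurable
  have hptw : ∀ z, S.indicator (ratio x) ((LinearIsometryEquiv.neg ℝ
      (E := EuclideanSpace ℝ (Fin d))) z) = S'.indicator (ratio x) z := by
    intro z
    have hratneg : ratio x (-z) = ratio x z := by
      unfold ratio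
      rw [inner_neg_right, neg_pow, norm_neg]
      simp
    rw [show (LinearIsometryEquiv.neg ℝ (E := EuclideanSpace ℝ (Fin d))) z = -z from rfl]
    by_cases h : ⟪x, z⟫ < 0
    · have h1 : -z ∈ S := by simp only [S, Set.mem_setOf_eq, inner_neg_right]; linarith
      have h2 : z ∈ S' := h
      rw [Set.indicator_of_mem h1, Set.indicator_of_mem h2, hratneg]
    · have h1 : -z ∉ S := by
        simp only [S, Set.mem_setOf_eq, inner_neg_right, not_lt] at *; linarith
      have h2 : z ∉ S' := h
      rw [Set.indicator_of_notMem h1, Set.indicator_of_notMem h2]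
  have hsum : ∀ z, S.indicator (ratio x) z + S'.indicator (ratio x) z = ratio x z := by
    intro z
    by_cases h1 : z ∈ S
    · have h2 : z ∉ S' := by
        simp only [S, S', Set.mem_setOf_eq, not_lt] at *; linarith
      rw [Set.indicator_of_mem h1, Set.indicator_of_notMem h2, add_zero]
    · by_cases h2 : z ∈ S'
      · rw [Set.indicator_of_notMem h1, Set.indicator_of_mem h2, zero_add]
      · rw [Set.indicator_of_notMem h1, Set.indicator_of_notMem h2, add_zero]
        have h0 : ⟪x, z⟫ = 0 := by
          simp only [S, S', Set.mem_setOf_eq, not_lt] at h1 h2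
          linarith
        simp [ratio, h0]
  have hAB : ∫ z, S.indicator (ratio x) z ∂(stdG d)
      = ∫ z, S'.indicator (ratio x) z ∂(stdG d) := by
    rw [← hkey]
    exact integral_congr_ae (Filter.Eventually.of_forall fun z => hptw z)
  have hintS : Integrable (S.indicator (ratio x)) (stdG d) :=
    (ratio_integrable x (stdG d)).indicator hS
  have hintS' : Integrable (S'.indicator (ratio x)) (stdG d) :=
    (ratio_integrable x (stdG d)).indicator hS'
  have htot : ∫ z, S.indicator (ratio x) z ∂(stdG d)
      + ∫ z, S'.indicator (ratio x) z ∂(stdG d) = ∫ z, ratio x z ∂(stdG d) := by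
    rw [← integral_add hintS hintS']
    exact integral_congr_ae (Filter.Eventually.of_forall fun z => hsum z)
  rw [← integral_indicator hS]
  linarith [hAB, htot]

end Main

theorem gaussian_inner_ratio_positive_part {d : ℕ} (hd : 0 < d) {Ω : Type*} [MeasurableSpace Ω]
    (P : Measure Ω) [IsProbabilityMeasure P]
    (x : EuclideanSpace ℝ (Fin d)) (hx : x ≠ 0) (y : Ω → EuclideanSpace ℝ (Fin d))
    (hmeas : ∀ i, Measurable fun ω => y ω i)
    (hindep : iIndepFun (fun i ω => y ω i) P)
    (hdist : ∀ i, P.map (fun ω => y ω i) = gaussianReal 0 1) :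
    ∫ ω in {ω | 0 < ⟪x, y ω⟫}, (⟪x, y ω⟫) ^ 2 / ‖y ω‖ ^ 2 ∂P = ‖x‖ ^ 2 / (2 * d) := by
  have hcoords : Measurable fun ω (i : Fin d) => y ω i := measurable_pi_lambda _ hmeas
  have hYm : Measurable y :=
    ((MeasurableEquiv.toLp 2 (Fin d → ℝ)).measurable.comp hcoords : _)
  have hjoint : P.map (fun ω (i : Fin d) => y ω i)
      = Measure.pi (fun _ => gaussianReal 0 1) := by
    refine (Measure.pi_eq fun s hs => ?_).symm
    rw [Measure.map_apply hcoords (MeasurableSet.univ_pi hs)]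
    have hpre : (fun ω (i : Fin d) => y ω i) ⁻¹' (Set.univ.pi s)
        = ⋂ i, (fun ω => y ω i) ⁻¹' (s i) := by
      ext ω; simp [Set.mem_univ_pi]
    rw [hpre]
    have h := hindep.measure_inter_preimage_eq_mul Finset.univ (fun i hi => hs i)
    simp only [Finset.mem_univ, Set.iInter_true, Finset.prod_congr] at h
    rw [h]
    refine Finset.prod_congr rfl fun i _ => ?_
    rw [← Measure.map_apply (hmeas i) (hs i), hdist i]
  have hlaw : P.map y = stdG d := by
    rw [stdG_eq_pi, ← hjoint,
      Measure.map_map (MeasurableEquiv.measurable _) hcoords]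
    rfl
  have hS : MeasurableSet {z : EuclideanSpace ℝ (Fin d) | 0 < ⟪x, z⟫} :=
    measurableSet_lt measurable_const
      (Continuous.inner continuous_const continuous_id).measurable
  have hstep : ∫ ω in {ω | 0 < ⟪x, y ω⟫}, (⟪x, y ω⟫) ^ 2 / ‖y ω‖ ^ 2 ∂P
      = ∫ z in {z | 0 < ⟪x, z⟫}, ratio x z ∂(stdG d) := by
    rw [← hlaw, setIntegral_map hS (ratio_meas x).aestronglyMeasurable hYm.aemeasurable]
    rfl
  rw [hstep, half_integral, integral_ratio hd x hx]
  rw [div_div, mul_comm (d : ℝ) 2]
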